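/- A language L is finite and closed under permutations (perm(L) = L) if and only if L can be obtained from the atomic languages ∅, {ε}, and {a} for a ∈ Σ using only the operations of union and shuffle (no iterated shuffle). -/

import Mathlib

variable {α : Type*}

/-- `IsShuffle u v w` means `w` is an interleaving of `u` and `v`. -/
inductive IsShuffle : List α → List α → List α → Prop
  | nil : IsShuffle [] [] []
  | left {u v w : List α} (a : α) : IsShuffle u v w → IsShuffle (a :: u) v (a :: w)
  | right {u v w : List α} (b : α) : IsShuffle u v w → IsShuffle u (b :: v) (b :: w)

/-- The shuffle `u ⧢ v` of two words, as a set of words. -/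
def wordShuffle (u v : List α) : Set (List α) := {w | IsShuffle u v w}

/-- The shuffle of two languages. -/
def lshuffle (L₁ L₂ : Set (List α)) : Set (List α) :=
  {w | ∃ u ∈ L₁, ∃ v ∈ L₂, IsShuffle u v w}

/-- n-fold shuffle power. -/
def shufflePow (L : Set (List α)) : ℕ → Set (List α)
  | 0 => {[]}
  | n + 1 => lshuffle (shufflePow L n) L

/-- Iterated shuffle `L^{⧢,*}`. -/
def shuffleStar (L : Set (List α)) : Set (List α) := ⋃ n, shufflePow L n

/-- The set of permutations of a word. -/
def permW (w : List α) : Set (List α) := {v | v.Perm w}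

/-- Permutation closure of a language. -/
def permL (L : Set (List α)) : Set (List α) := {v | ∃ w ∈ L, v.Perm w}

/-- Concatenation of languages. -/
def catL (L₁ L₂ : Set (List α)) : Set (List α) := {w | ∃ u ∈ L₁, ∃ v ∈ L₂, w = u ++ v}

/-- n-fold concatenation power. -/
def catPow (L : Set (List α)) : ℕ → Set (List α)
  | 0 => {[]}
  | n + 1 => catL (catPow L n) L

/-- Kleene star. -/
def kstar (L : Set (List α)) : Set (List α) := ⋃ n, catPow L n

/-- Parikh mapping: counts occurrences of each letter. -/
def parikh [DecidableEq α] (w : List α) : α → ℕ := fun a => w.count a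

/-- Languages described by α-SHUF expressions without iterated shuffle. -/
inductive ShufExprZero : Set (List α) → Prop
  | empty : ShufExprZero ∅
  | eps : ShufExprZero {[]}
  | single (a : α) : ShufExprZero {[a]}
  | union {L₁ L₂ : Set (List α)} : ShufExprZero L₁ → ShufExprZero L₂ → ShufExprZero (L₁ ∪ L₂)
  | shuf {L₁ L₂ : Set (List α)} : ShufExprZero L₁ → ShufExprZero L₂ → ShufExprZero (lshuffle L₁ L₂)

lemma shuffle_perm_append {u v w : List α} (h : IsShuffle u v w) : w.Perm (u ++ v) := by
  induction h with
  | nil => simp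
  | left a _ ih => exact ih.cons a
  | right b _ ih => exact (ih.cons b).trans List.perm_middle.symm

lemma perm_exists_shuffle {v u₁ u₂ : List α} (h : v.Perm (u₁ ++ u₂)) :
    ∃ s t, s.Perm u₁ ∧ t.Perm u₂ ∧ IsShuffle s t v := by
  classical
  induction v generalizing u₁ u₂ with
  | nil =>
    have : u₁ ++ u₂ = [] := (List.perm_nil.mp h.symm)
    rcases List.append_eq_nil_iff.mp this with ⟨h1, h2⟩
    subst h1; subst h2
    exact ⟨[], [], List.Perm.refl _, List.Perm.refl _, IsShuffle.nil⟩
  | cons a v ih =>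
    have ha : a ∈ u₁ ++ u₂ := h.subset (List.mem_cons_self)
    rcases List.mem_append.mp ha with h1 | h2
    · have hp : u₁.Perm (a :: u₁.erase a) := List.perm_cons_erase h1
      have hv : v.Perm (u₁.erase a ++ u₂) := by
        have := h.trans (hp.append_right u₂)
        exact (List.perm_cons a).mp this
      obtain ⟨s, t, hs, ht, hsh⟩ := ih hv
      exact ⟨a :: s, t, (hs.cons a).trans hp.symm, ht, IsShuffle.left a hsh⟩
    · have hp : u₂.Perm (a :: u₂.erase a) := List.perm_cons_erase h2
      have hv : v.Perm (u₁ ++ u₂.erase a) := by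
        have := h.trans (hp.append_left u₁)
        have h2 : (a :: v).Perm (a :: (u₁ ++ u₂.erase a)) :=
          this.trans List.perm_middle
        exact (List.perm_cons a).mp h2
      obtain ⟨s, t, hs, ht, hsh⟩ := ih hv
      exact ⟨s, a :: t, hs, (ht.cons a).trans hp.symm, IsShuffle.right a hsh⟩

lemma permW_finite (w : List α) : (permW w).Finite := by
  apply (w.permutations.finite_toSet).subset
  intro v hv
  exact List.mem_permutations.mpr hv

lemma shufExprZero_permW (w : List α) : ShufExprZero (permW w) := by
  induction w with
  | nil =>
    have : permW ([] : List α) = {[]} := by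
      ext v; simp [permW]
    rw [this]; exact ShufExprZero.eps
  | cons a w ih =>
    have : permW (a :: w) = lshuffle {[a]} (permW w) := by
      ext v
      constructor
      · intro hv
        obtain ⟨s, t, hs, ht, hsh⟩ := perm_exists_shuffle (v := v) (u₁ := [a]) (u₂ := w) hv
        exact ⟨s, List.perm_singleton.mp hs, t, ht, hsh⟩
      · rintro ⟨s, hs, t, ht, hsh⟩
        rw [Set.mem_singleton_iff] at hs; subst hs
        exact (shuffle_perm_append hsh).trans (ht.cons a)
    rw [this]
    exact ShufExprZero.shuf (ShufExprZero.single a) ih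


theorem stmt18 (L : Set (List α)) :
    (L.Finite ∧ permL L = L) ↔ ShufExprZero L := by
  constructor
  · rintro ⟨hF, hP⟩
    have key : ∀ S : Set (List α), S.Finite → ShufExprZero (⋃ w ∈ S, permW w) := by
      intro S hS
      refine Set.Finite.induction_on (motive := fun S _ => ShufExprZero (⋃ w ∈ S, permW w))
        S hS (by simpa using ShufExprZero.empty) ?_
      intro a s _ _ ih
      have : (⋃ w ∈ insert a s, permW w) = permW a ∪ ⋃ w ∈ s, permW w := by
        simp [Set.biUnion_insert]
      rw [this]
      exact ShufExprZero.union (shufExprZero_permW a) ih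
    have hL : L = ⋃ w ∈ L, permW w := by
      apply Set.Subset.antisymm
      · intro w hw
        exact Set.mem_biUnion hw (List.Perm.refl w)
      · intro v hv
        rw [Set.mem_iUnion₂] at hv
        obtain ⟨w, hw, hvw⟩ := hv
        rw [← hP]; exact ⟨w, hw, hvw⟩
    rw [hL]; exact key L hF
  · intro h
    induction h with
    | empty => refine ⟨Set.finite_empty, ?_⟩; ext v; simp [permL]
    | eps => refine ⟨Set.finite_singleton _, ?_⟩; ext v; simp [permL, List.perm_nil]
    | single a => refine ⟨Set.finite_singleton _, ?_⟩; ext v; simp [permL, List.perm_singleton]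
    | @union L₁ L₂ _ _ ih₁ ih₂ =>
      refine ⟨ih₁.1.union ih₂.1, ?_⟩
      apply Set.Subset.antisymm
      · rintro v ⟨w, hw | hw, hvw⟩
        · exact Or.inl (ih₁.2 ▸ ⟨w, hw, hvw⟩)
        · exact Or.inr (ih₂.2 ▸ ⟨w, hw, hvw⟩)
      · intro v hv; exact ⟨v, hv, List.Perm.refl v⟩
    | @shuf L₁ L₂ _ _ ih₁ ih₂ =>
      constructor
      · apply Set.Finite.subset (Set.Finite.biUnion ih₁.1 fun u _ =>
          Set.Finite.biUnion ih₂.1 fun v _ => permW_finite (u ++ v))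
        rintro w ⟨u, hu, v, hv, hsh⟩
        exact Set.mem_biUnion hu (Set.mem_biUnion hv (shuffle_perm_append hsh))
      · apply Set.Subset.antisymm
        · rintro v ⟨w, ⟨u₁, hu₁, u₂, hu₂, hsh⟩, hvw⟩
          have hv : v.Perm (u₁ ++ u₂) := hvw.trans (shuffle_perm_append hsh)
          obtain ⟨s, t, hs, ht, hsh'⟩ := perm_exists_shuffle hv
          refine ⟨s, ?_, t, ?_, hsh'⟩
          · rw [← ih₁.2]; exact ⟨u₁, hu₁, hs⟩
          · rw [← ih₂.2]; exact ⟨u₂, hu₂, ht⟩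
        · intro v hv; exact ⟨v, hv, List.Perm.refl v⟩
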